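/- Let W₁,…,W_p be real square matrices and M₁,…,M_p symmetric positive definite matrices such that M_i(W_iD_i - I) + (W_iD_i - I)ᵀM_i ⪯ -2λ M_i for all admissible diagonal D_i with entries in [0,g] and some λ > 0. Let L̃ be a block matrix with blocks L_{ij} satisfying M̃L̃ + L̃ᵀM̃ ⪯ 0 where M̃ = BlockDiag(k₁M₁,…,k_pM_p), k_i > 0. Then the block-diagonal Jacobian J̃ = BlockDiag(W₁D₁ - I, …, W_pD_p - I) + L̃ satisfies M̃J̃ + J̃ᵀM̃ ⪯ -2λ M̃. -/

import Mathlib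

open Matrix

/-- `X ⪯ Y` for real matrices: `Y - X` positive semidefinite. -/
def MatLE {m : Type*} [Fintype m] (X Y : Matrix m m ℝ) : Prop := (Y - X).PosSemidef


lemma psd_add {n : Type*} [Fintype n] {A B : Matrix n n ℝ} (hA : A.PosSemidef)
    (hB : B.PosSemidef) : (A + B).PosSemidef := by
  refine .of_dotProduct_mulVec_nonneg (hA.1.add hB.1) fun x => ?_
  rw [add_mulVec, dotProduct_add]
  exact add_nonneg (hA.dotProduct_mulVec_nonneg x) (hB.dotProduct_mulVec_nonneg x)

lemma psd_smul {n : Type*} [Fintype n] {A : Matrix n n ℝ} (hA : A.PosSemidef) {c : ℝ}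
    (hc : 0 ≤ c) : (c • A).PosSemidef := by
  refine .of_dotProduct_mulVec_nonneg ?_ fun x => ?_
  · unfold Matrix.IsHermitian
    rw [conjTranspose_smul, hA.1]
    simp
  · rw [smul_mulVec, dotProduct_smul, smul_eq_mul]
    exact mul_nonneg hc (hA.dotProduct_mulVec_nonneg x)

lemma psd_block {p : ℕ} {N : Fin p → ℕ} (f : ∀ i, Matrix (Fin (N i)) (Fin (N i)) ℝ)
    (h : ∀ i, (f i).PosSemidef) : (blockDiagonal' f).PosSemidef := by
  refine .of_dotProduct_mulVec_nonneg ?_ fun x => ?_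
  · unfold Matrix.IsHermitian
    rw [blockDiagonal'_conjTranspose]
    exact congrArg _ (funext fun i => (h i).1)
  · have key : dotProduct (star x) ((blockDiagonal' f) *ᵥ x)
        = ∑ i, dotProduct (star (fun a => x ⟨i,a⟩)) (f i *ᵥ (fun a => x ⟨i,a⟩)) := by
      simp only [dotProduct, mulVec]
      rw [← Finset.univ_sigma_univ, Finset.sum_sigma]
      refine Finset.sum_congr rfl fun i _ => ?_
      refine Finset.sum_congr rfl fun a _ => ?_
      congr 1
      rw [Finset.sum_sigma]
      rw [Finset.sum_eq_single i]
      · simp [blockDiagonal'_apply_eq]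
      · intro j _ hj
        apply Finset.sum_eq_zero
        intro b _
        rw [blockDiagonal'_apply_ne _ _ _ (Ne.symm hj), zero_mul]
      · intro hi; exact absurd (Finset.mem_univ i) hi
    rw [key]
    exact Finset.sum_nonneg fun i _ => (h i).dotProduct_mulVec_nonneg _

/-- Network of networks: if each subnetwork Jacobian `Jᵢ = WᵢDᵢ - I` (for admissible
diagonal `Dᵢ` with entries in `[0,g]`) satisfies `MᵢJᵢ + JᵢᵀMᵢ ⪯ -2lamMᵢ`, and the
interconnection matrix `L̃` satisfies `M̃L̃ + L̃ᵀM̃ ⪯ 0` with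
`M̃ = BlockDiag(k₁M₁,…,k_pM_p)`, `kᵢ > 0`, then `J̃ = BlockDiag(J₁,…,J_p) + L̃`
satisfies `M̃J̃ + J̃ᵀM̃ ⪯ -2lamM̃`. -/
theorem stmt17 {p : ℕ} {N : Fin p → ℕ}
    (W : ∀ i, Matrix (Fin (N i)) (Fin (N i)) ℝ)
    (M : ∀ i, Matrix (Fin (N i)) (Fin (N i)) ℝ)
    (hM : ∀ i, (M i).PosDef)
    (g lam : ℝ) (hg : 0 < g) (hlam : 0 < lam)
    (hsub : ∀ i, ∀ D : Matrix (Fin (N i)) (Fin (N i)) ℝ,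
      D.IsDiag → (∀ a, 0 ≤ D a a ∧ D a a ≤ g) →
      MatLE (M i * (W i * D - 1) + (W i * D - 1)ᵀ * M i) ((-(2 * lam)) • M i))
    (k : Fin p → ℝ) (hk : ∀ i, 0 < k i)
    (Mtil : Matrix ((i : Fin p) × Fin (N i)) ((i : Fin p) × Fin (N i)) ℝ)
    (hMtil : Mtil = Matrix.blockDiagonal' (fun i => k i • M i))
    (Ltil : Matrix ((i : Fin p) × Fin (N i)) ((i : Fin p) × Fin (N i)) ℝ)
    (hLtil : MatLE (Mtil * Ltil + Ltilᵀ * Mtil) 0)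
    (D : ∀ i, Matrix (Fin (N i)) (Fin (N i)) ℝ)
    (hDdiag : ∀ i, (D i).IsDiag) (hDbound : ∀ i a, 0 ≤ D i a a ∧ D i a a ≤ g)
    (Jtil : Matrix ((i : Fin p) × Fin (N i)) ((i : Fin p) × Fin (N i)) ℝ)
    (hJtil : Jtil = Matrix.blockDiagonal' (fun i => W i * D i - 1) + Ltil) :
    MatLE (Mtil * Jtil + Jtilᵀ * Mtil) ((-(2 * lam)) • Mtil) := by
  set Jd := Matrix.blockDiagonal' (fun i => W i * D i - 1) with hJd
  unfold MatLE at *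
  have h1 : ∀ i, ((k i) • ((-(2*lam)) • M i
      - (M i * (W i * D i - 1) + (W i * D i - 1)ᵀ * M i))).PosSemidef :=
    fun i => psd_smul (hsub i (D i) (hDdiag i) (hDbound i)) (hk i).le
  have h2 := psd_block _ h1
  have hbd : Matrix.blockDiagonal' (fun i => (k i) • ((-(2*lam)) • M i
      - (M i * (W i * D i - 1) + (W i * D i - 1)ᵀ * M i)))
      = (-(2*lam)) • Mtil - (Mtil * Jd + Jdᵀ * Mtil) := by
    rw [hMtil, hJd, blockDiagonal'_transpose, ← blockDiagonal'_mul, ← blockDiagonal'_mul,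
      ← blockDiagonal'_add]
    rw [show (-(2*lam)) • Matrix.blockDiagonal' (fun i => k i • M i)
      = Matrix.blockDiagonal' ((-(2*lam)) • fun i => k i • M i) from
        (blockDiagonal'_smul _ _).symm]
    rw [← blockDiagonal'_sub]
    refine congrArg Matrix.blockDiagonal' (funext fun i => ?_)
    simp only [Pi.smul_apply, Pi.sub_apply, Pi.add_apply]
    rw [smul_sub, smul_add, smul_comm, smul_mul_assoc, mul_smul_comm]
  have key : (-(2*lam)) • Mtil - (Mtil * Jtil + Jtilᵀ * Mtil)
      = ((-(2*lam)) • Mtil - (Mtil * Jd + Jdᵀ * Mtil))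
        + (0 - (Mtil * Ltil + Ltilᵀ * Mtil)) := by
    rw [hJtil]
    simp only [mul_add, transpose_add, add_mul]
    abel
  rw [key, ← hbd]
  exact psd_add h2 hLtil
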